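/- Let Ω ⊆ ℂ be a domain, h : Ω → ℂ holomorphic, and u₁, u₂ : Ω → ℝ C² solutions of Δu = 4|h(z)|²e^{2u}. Then v(z) = max{u₁(z), u₂(z)} - u₂(z) is subharmonic on Ω. -/

import Mathlib

open Complex Real

/-- Euclidean Laplacian of a real-valued function on `ℂ`. -/
noncomputable def lap (u : ℂ → ℝ) (z : ℂ) : ℝ :=
  fderiv ℝ (fun w => fderiv ℝ u w 1) z 1 + fderiv ℝ (fun w => fderiv ℝ u w Complex.I) z Complex.I

/-- `v` is subharmonic on the open set `Ω`: it is continuous and satisfies the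
sub-mean value inequality on all sufficiently small circles. -/
def SubharmonicOn (v : ℂ → ℝ) (Ω : Set ℂ) : Prop :=
  ContinuousOn v Ω ∧
  ∀ z₀ ∈ Ω, ∃ ε > 0, ∀ r : ℝ, 0 < r → r < ε →
    v z₀ ≤ (1 / (2 * π)) * ∫ t in (0:ℝ)..(2 * π), v (z₀ + r * Complex.exp (t * Complex.I))

set_option maxHeartbeats 1000000

open Metric MeasureTheory Set intervalIntegral in
lemma param_deriv {F F' : ℝ → ℝ → ℝ} {ε s₀ : ℝ} (hs₀ : |s₀| < ε)
    (hFc : ∀ s, |s| < ε → Continuous fun t => F s t)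
    (hF'c : ContinuousOn (fun p : ℝ × ℝ => F' p.1 p.2) ({s | |s| < ε} ×ˢ (univ : Set ℝ)))
    (hd : ∀ s, |s| < ε → ∀ t : ℝ, HasDerivAt (fun x => F x t) (F' s t) s) :
    HasDerivAt (fun s => ∫ t in (0:ℝ)..(2*π), F s t) (∫ t in (0:ℝ)..(2*π), F' s₀ t) s₀ := by
  set δ := (ε - |s₀|) / 2 with hδdef
  have hδ : 0 < δ := by simp only [hδdef]; linarith
  have hsub : closedBall s₀ δ ⊆ {s | |s| < ε} := by
    intro x hx
    simp only [mem_closedBall, Real.dist_eq] at hx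
    have h1 : |x| ≤ |x - s₀| + |s₀| := by
      calc |x| = |x - s₀ + s₀| := by ring_nf
      _ ≤ |x - s₀| + |s₀| := abs_add_le _ _
    simp only [mem_setOf_eq]
    have : |x| ≤ δ + |s₀| := by linarith
    simp only [hδdef] at this; linarith
  have hKc : IsCompact (closedBall s₀ δ ×ˢ Icc (0:ℝ) (2*π)) :=
    (isCompact_closedBall _ _).prod isCompact_Icc
  obtain ⟨C, hC⟩ := hKc.exists_bound_of_continuousOn
    (hF'c.mono (by exact Set.prod_mono hsub (subset_univ _)))
  have hball : ball s₀ δ ⊆ {s | |s| < ε} := ball_subset_closedBall.trans hsub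
  have := (intervalIntegral.hasDerivAt_integral_of_dominated_loc_of_deriv_le
    (F := F) (F' := F') (x₀ := s₀) (a := 0) (b := 2*π) (μ := volume)
    (bound := fun _ => C) (ball_mem_nhds s₀ hδ)
    (Filter.eventually_of_mem (ball_mem_nhds s₀ hδ)
      (fun x hx => ((hFc x (hball hx)).aestronglyMeasurable)))
    ((hFc s₀ hs₀).intervalIntegrable _ _)
    ((hF'c.comp_continuous (f := fun t : ℝ => (s₀, t)) (by fun_prop)
        (fun t => ⟨hs₀, mem_univ t⟩)).aestronglyMeasurable)
    (Filter.Eventually.of_forall (fun t ht x hx => by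
      refine hC (x, t) ⟨ball_subset_closedBall hx, ?_⟩
      rw [Set.uIoc_of_le (by positivity : (0:ℝ) ≤ 2*π)] at ht
      exact Ioc_subset_Icc_self ht))
    intervalIntegrable_const
    (Filter.Eventually.of_forall (fun t ht x hx => hd x (hball hx) t)))
  exact this.2


open Metric MeasureTheory Set intervalIntegral in
lemma submean {w : ℂ → ℝ} {U : Set ℂ} (hU : IsOpen U) (hw : ContDiffOn ℝ 2 w U)
    (hlap : ∀ z ∈ U, 0 ≤ lap w z) {z₀ : ℂ} (hz : z₀ ∈ U) :
    ∃ ε > 0, ∀ r : ℝ, 0 < r → r < ε →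
      w z₀ ≤ (1 / (2 * π)) * ∫ t in (0:ℝ)..(2 * π), w (z₀ + r * Complex.exp (t * Complex.I)) := by
  obtain ⟨ε, hε, hball⟩ : ∃ ε > 0, closedBall z₀ ε ⊆ U :=
    (Metric.nhds_basis_closedBall.mem_iff.1 (hU.mem_nhds hz))
  refine ⟨ε, hε, fun r hr hrε => ?_⟩
  have h2π : (0:ℝ) < 2 * π := by positivity
  -- membership
  have hmem : ∀ s : ℝ, |s| < ε → ∀ t : ℝ, circleMap z₀ s t ∈ U := by
    intro s hs t
    apply hball
    simp only [mem_closedBall, circleMap, Complex.dist_eq, add_sub_cancel_left]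
    rw [norm_mul, Complex.norm_exp_ofReal_mul_I, mul_one, Complex.norm_real, Real.norm_eq_abs]
    exact hs.le
  -- derivatives
  set f1 : ℂ → ℂ →L[ℝ] ℝ := fderiv ℝ w with hf1def
  set f2 : ℂ → ℂ →L[ℝ] (ℂ →L[ℝ] ℝ) := fderiv ℝ (fderiv ℝ w) with hf2def
  have hwd : ∀ z ∈ U, HasFDerivAt w (f1 z) z := fun z hzU =>
    ((hw.differentiableOn (by norm_num)).differentiableAt (hU.mem_nhds hzU)).hasFDerivAt
  have hf1C : ContDiffOn ℝ 1 f1 U := hw.fderiv_of_isOpen hU (by norm_num)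
  have hf1d : ∀ z ∈ U, HasFDerivAt f1 (f2 z) z := fun z hzU =>
    ((hf1C.differentiableOn (by norm_num)).differentiableAt (hU.mem_nhds hzU)).hasFDerivAt
  have hf1c : ContinuousOn f1 U := hw.continuousOn_fderiv_of_isOpen hU (by norm_num)
  have hf2c : ContinuousOn f2 U := hf1C.continuousOn_fderiv_of_isOpen hU le_rfl
  have hsymm : ∀ z ∈ U, ∀ a b : ℂ, f2 z a b = f2 z b a := fun z hzU a b =>
    second_derivative_symmetric_of_eventually
      (Filter.eventually_of_mem (hU.mem_nhds hzU) fun y hy => hwd y hy) (hf1d z hzU) a b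
  have hlapf : ∀ z ∈ U, lap w z = f2 z 1 1 + f2 z Complex.I Complex.I := by
    intro z hzU
    have key : ∀ v : ℂ, fderiv ℝ (fun y => f1 y v) z = (f2 z).flip v := by
      intro v
      have h1 : HasFDerivAt (fun y => f1 y v)
          ((ContinuousLinearMap.apply ℝ ℝ v).comp (f2 z)) z :=
        (ContinuousLinearMap.apply ℝ ℝ v).hasFDerivAt.comp z (hf1d z hzU)
      rw [h1.fderiv]; rfl
    simp only [lap, hf1def] at *
    rw [key 1, key Complex.I]; rfl
  have hrot : ∀ z ∈ U, ∀ t : ℝ,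
      f2 z (Complex.exp (↑t * Complex.I)) (Complex.exp (↑t * Complex.I)) +
      f2 z (Complex.exp (↑t * Complex.I) * Complex.I)
           (Complex.exp (↑t * Complex.I) * Complex.I) = lap w z := by
    intro z hzU t
    have he : Complex.exp (↑t * Complex.I)
        = (Real.cos t : ℝ) • (1:ℂ) + (Real.sin t : ℝ) • Complex.I := by
      rw [Complex.exp_mul_I]
      push_cast [Complex.real_smul]
      ring
    have heI : Complex.exp (↑t * Complex.I) * Complex.I
        = (-Real.sin t : ℝ) • (1:ℂ) + (Real.cos t : ℝ) • Complex.I := by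
      rw [he]
      push_cast [Complex.real_smul]
      ring_nf
      rw [Complex.I_sq]
      ring
    rw [heI, he, hlapf z hzU]
    simp only [map_add, _root_.map_smul, ContinuousLinearMap.add_apply,
      ContinuousLinearMap.smul_apply, smul_eq_mul]
    rw [hsymm z hzU Complex.I 1]
    linear_combination (f2 z 1 1 + f2 z Complex.I Complex.I) * (Real.sin_sq_add_cos_sq t)
  -- continuity facts
  have heC : Continuous fun t : ℝ => Complex.exp (↑t * Complex.I) := by fun_prop
  have hcC : Continuous fun p : ℝ × ℝ => circleMap z₀ p.1 p.2 := by
    simp only [circleMap]; fun_prop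
  have hmemP : MapsTo (fun p : ℝ × ℝ => circleMap z₀ p.1 p.2)
      ({s : ℝ | |s| < ε} ×ˢ (univ : Set ℝ)) U := fun p hp => hmem p.1 hp.1 p.2
  -- derivative of circleMap in the radius
  have hcs : ∀ s t : ℝ, HasDerivAt (fun x : ℝ => circleMap z₀ x t)
      (Complex.exp (↑t * Complex.I)) s := by
    intro s t
    have h0 : HasDerivAt (fun x : ℝ => (x : ℂ)) 1 s := by
      exact Complex.ofRealCLM.hasDerivAt (x := s)
    simpa [circleMap] using (h0.mul_const (Complex.exp (↑t * Complex.I))).const_add z₀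
  have hexpd : ∀ t : ℝ, HasDerivAt (fun t : ℝ => Complex.exp (↑t * Complex.I))
      (Complex.exp (↑t * Complex.I) * Complex.I) t := by
    intro t
    have h := hasDerivAt_circleMap 0 1 t
    rw [show circleMap 0 1 = fun t : ℝ => Complex.exp (↑t * Complex.I) from
      funext fun θ => by simp [circleMap]] at h
    simpa [circleMap] using h
  -- derivative of the circle average
  have hgA : ∀ s : ℝ, |s| < ε → HasDerivAt
      (fun x => ∫ t in (0:ℝ)..(2*π), w (circleMap z₀ x t))
      (∫ t in (0:ℝ)..(2*π), f1 (circleMap z₀ s t) (Complex.exp (↑t * Complex.I))) s := by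
    intro s hs
    have key := param_deriv (F := fun x t => w (circleMap z₀ x t))
      (F' := fun s t => f1 (circleMap z₀ s t) (Complex.exp (↑t * Complex.I))) (s₀ := s)
      hs ?_ ?_ ?_
    · exact key
    · exact fun x hx => hw.continuousOn.comp_continuous (continuous_circleMap z₀ x)
        (fun t => hmem x hx t)
    · exact ContinuousOn.clm_apply (hf1c.comp hcC.continuousOn hmemP)
        ((heC.comp continuous_snd).continuousOn)
    · exact fun x hx t => (hwd _ (hmem x hx t)).comp_hasDerivAt x (hcs x t)
  -- derivative of A
  have hAB : ∀ s : ℝ, |s| < ε → HasDerivAt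
      (fun x => ∫ t in (0:ℝ)..(2*π), f1 (circleMap z₀ x t) (Complex.exp (↑t * Complex.I)))
      (∫ t in (0:ℝ)..(2*π), f2 (circleMap z₀ s t) (Complex.exp (↑t * Complex.I))
        (Complex.exp (↑t * Complex.I))) s := by
    intro s hs
    have key := param_deriv
      (F := fun x t => f1 (circleMap z₀ x t) (Complex.exp (↑t * Complex.I)))
      (F' := fun s t => f2 (circleMap z₀ s t) (Complex.exp (↑t * Complex.I))
        (Complex.exp (↑t * Complex.I))) (s₀ := s) hs ?_ ?_ ?_
    · exact key
    · exact fun x hx => (hf1c.comp_continuous (continuous_circleMap z₀ x)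
        (fun t => hmem x hx t)).clm_apply heC
    · exact ContinuousOn.clm_apply
        (ContinuousOn.clm_apply (hf2c.comp hcC.continuousOn hmemP)
          ((heC.comp continuous_snd).continuousOn))
        ((heC.comp continuous_snd).continuousOn)
    · intro x hx t
      have h1 : HasDerivAt (fun y : ℝ => f1 (circleMap z₀ y t))
          (f2 (circleMap z₀ x t) (Complex.exp (↑t * Complex.I))) x :=
        (hf1d _ (hmem x hx t)).comp_hasDerivAt x (hcs x t)
      simpa using h1.clm_apply (hasDerivAt_const x (Complex.exp (↑t * Complex.I)))
  -- continuity of integrands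
  have hcont1 : ∀ s : ℝ, |s| < ε → Continuous fun t : ℝ =>
      f1 (circleMap z₀ s t) (Complex.exp (↑t * Complex.I)) := fun s hs =>
    (hf1c.comp_continuous (continuous_circleMap z₀ s) (fun t => hmem s hs t)).clm_apply heC
  have hcont2 : ∀ s : ℝ, |s| < ε → Continuous fun t : ℝ =>
      f2 (circleMap z₀ s t) (Complex.exp (↑t * Complex.I) * Complex.I)
        (Complex.exp (↑t * Complex.I) * Complex.I) := fun s hs =>
    ((hf2c.comp_continuous (continuous_circleMap z₀ s) (fun t => hmem s hs t)).clm_apply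
      (heC.mul continuous_const)).clm_apply (heC.mul continuous_const)
  have hcont3 : ∀ s : ℝ, |s| < ε → Continuous fun t : ℝ =>
      f2 (circleMap z₀ s t) (Complex.exp (↑t * Complex.I))
        (Complex.exp (↑t * Complex.I)) := fun s hs =>
    ((hf2c.comp_continuous (continuous_circleMap z₀ s)
      (fun t => hmem s hs t)).clm_apply heC).clm_apply heC
  -- tangential identity
  have hAE : ∀ s : ℝ, |s| < ε →
      (∫ t in (0:ℝ)..(2*π), f1 (circleMap z₀ s t) (Complex.exp (↑t * Complex.I)))
      = s * ∫ t in (0:ℝ)..(2*π), f2 (circleMap z₀ s t)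
          (Complex.exp (↑t * Complex.I) * Complex.I)
          (Complex.exp (↑t * Complex.I) * Complex.I) := by
    intro s hs
    have hq : ∀ t : ℝ, HasDerivAt
        (fun t : ℝ => f1 (circleMap z₀ s t) (Complex.exp (↑t * Complex.I) * Complex.I))
        (s * f2 (circleMap z₀ s t) (Complex.exp (↑t * Complex.I) * Complex.I)
            (Complex.exp (↑t * Complex.I) * Complex.I)
          - f1 (circleMap z₀ s t) (Complex.exp (↑t * Complex.I))) t := by
      intro t
      have hphi : HasDerivAt (fun t : ℝ => f1 (circleMap z₀ s t))
          (f2 (circleMap z₀ s t) (circleMap 0 s t * Complex.I)) t :=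
        (hf1d _ (hmem s hs t)).comp_hasDerivAt t (hasDerivAt_circleMap z₀ s t)
      have hv : HasDerivAt (fun t : ℝ => Complex.exp (↑t * Complex.I) * Complex.I)
          (Complex.exp (↑t * Complex.I) * Complex.I * Complex.I) t :=
        (hexpd t).mul_const Complex.I
      have h2 := hphi.clm_apply hv
      have e1 : circleMap 0 s t * Complex.I
          = s • (Complex.exp (↑t * Complex.I) * Complex.I) := by
        simp [circleMap, Complex.real_smul]; ring
      have e2 : Complex.exp (↑t * Complex.I) * Complex.I * Complex.I
          = -(Complex.exp (↑t * Complex.I)) := by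
        rw [mul_assoc, Complex.I_mul_I]; ring
      rw [e1, e2] at h2
      simp only [_root_.map_smul, map_neg, ContinuousLinearMap.smul_apply,
        smul_eq_mul] at h2
      simpa [sub_eq_add_neg] using h2
    have hzero : (∫ t in (0:ℝ)..(2*π),
        (s * f2 (circleMap z₀ s t) (Complex.exp (↑t * Complex.I) * Complex.I)
            (Complex.exp (↑t * Complex.I) * Complex.I)
          - f1 (circleMap z₀ s t) (Complex.exp (↑t * Complex.I)))) = 0 := by
      rw [intervalIntegral.integral_eq_sub_of_hasDerivAt (fun t _ => hq t)
        (((continuous_const.mul (hcont2 s hs)).sub (hcont1 s hs)).intervalIntegrable _ _)]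
      have hper : circleMap z₀ s (2*π) = circleMap z₀ s 0 := by
        simpa using (periodic_circleMap z₀ s) 0
      have hexp2pi : Complex.exp (↑(2*π:ℝ) * Complex.I) = 1 := by
        push_cast; exact Complex.exp_two_pi_mul_I
      rw [hper, hexp2pi]
      norm_num
    rw [intervalIntegral.integral_sub
        (((hcont2 s hs).intervalIntegrable _ _).const_mul s)
        ((hcont1 s hs).intervalIntegrable _ _),
      intervalIntegral.integral_const_mul] at hzero
    linarith [hzero]
  -- nonnegativity of the derivative of s * A s
  have hIccsub : ∀ s : ℝ, s ∈ Icc (0:ℝ) r → |s| < ε := fun s hsI => by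
    rw [_root_.abs_of_nonneg hsI.1]; exact lt_of_le_of_lt hsI.2 hrε
  have hEB : ∀ s : ℝ, |s| < ε → 0 ≤ s → 0 ≤
      (∫ t in (0:ℝ)..(2*π), f1 (circleMap z₀ s t) (Complex.exp (↑t * Complex.I)))
      + s * ∫ t in (0:ℝ)..(2*π), f2 (circleMap z₀ s t) (Complex.exp (↑t * Complex.I))
          (Complex.exp (↑t * Complex.I)) := by
    intro s hs hs0
    rw [hAE s hs, ← mul_add,
      ← intervalIntegral.integral_add ((hcont2 s hs).intervalIntegrable _ _)
        ((hcont3 s hs).intervalIntegrable _ _)]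
    apply mul_nonneg hs0
    apply intervalIntegral.integral_nonneg h2π.le
    intro t _
    have h3 := hrot (circleMap z₀ s t) (hmem s hs t) t
    have h4 := hlap (circleMap z₀ s t) (hmem s hs t)
    linarith [h3, h4]
  -- s * A s is monotone on [0, r], hence A ≥ 0 on (0, r)
  have hGd : ∀ s : ℝ, |s| < ε → HasDerivAt
      (fun x : ℝ => x * ∫ t in (0:ℝ)..(2*π), f1 (circleMap z₀ x t)
        (Complex.exp (↑t * Complex.I)))
      ((∫ t in (0:ℝ)..(2*π), f1 (circleMap z₀ s t) (Complex.exp (↑t * Complex.I)))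
        + s * ∫ t in (0:ℝ)..(2*π), f2 (circleMap z₀ s t) (Complex.exp (↑t * Complex.I))
          (Complex.exp (↑t * Complex.I))) s := by
    intro s hs
    simpa [one_mul] using (hasDerivAt_id s).fun_mul (hAB s hs)
  have hGmono : MonotoneOn
      (fun x : ℝ => x * ∫ t in (0:ℝ)..(2*π), f1 (circleMap z₀ x t)
        (Complex.exp (↑t * Complex.I))) (Icc 0 r) := by
    apply monotoneOn_of_deriv_nonneg (convex_Icc 0 r)
    · exact fun x hx => (hGd x (hIccsub x hx)).continuousAt.continuousWithinAt
    · intro x hx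
      rw [interior_Icc] at hx
      exact (hGd x (hIccsub x (Ioo_subset_Icc_self hx))).differentiableAt.differentiableWithinAt
    · intro x hx
      rw [interior_Icc] at hx
      rw [(hGd x (hIccsub x (Ioo_subset_Icc_self hx))).deriv]
      exact hEB x (hIccsub x (Ioo_subset_Icc_self hx)) hx.1.le
  have hA0 : ∀ s : ℝ, s ∈ Ioo (0:ℝ) r →
      0 ≤ ∫ t in (0:ℝ)..(2*π), f1 (circleMap z₀ s t) (Complex.exp (↑t * Complex.I)) := by
    intro s hsI
    have h5 := hGmono (left_mem_Icc.mpr hr.le) (Ioo_subset_Icc_self hsI) hsI.1.le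
    simp only [zero_mul] at h5
    nlinarith [hsI.1, h5]
  -- the circle average is monotone on [0, r]
  have hgmono : MonotoneOn
      (fun x : ℝ => ∫ t in (0:ℝ)..(2*π), w (circleMap z₀ x t)) (Icc 0 r) := by
    apply monotoneOn_of_deriv_nonneg (convex_Icc 0 r)
    · exact fun x hx => (hgA x (hIccsub x hx)).continuousAt.continuousWithinAt
    · intro x hx
      rw [interior_Icc] at hx
      exact (hgA x (hIccsub x (Ioo_subset_Icc_self hx))).differentiableAt.differentiableWithinAt
    · intro x hx
      rw [interior_Icc] at hx
      rw [(hgA x (hIccsub x (Ioo_subset_Icc_self hx))).deriv]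
      exact hA0 x hx
  have hg0r : (∫ t in (0:ℝ)..(2*π), w (circleMap z₀ 0 t))
      ≤ ∫ t in (0:ℝ)..(2*π), w (circleMap z₀ r t) :=
    hgmono (left_mem_Icc.mpr hr.le) (right_mem_Icc.mpr hr.le) hr.le
  have hg0 : (∫ t in (0:ℝ)..(2*π), w (circleMap z₀ 0 t)) = 2*π * w z₀ := by
    simp [circleMap]
  rw [hg0] at hg0r
  have hfin : (∫ t in (0:ℝ)..(2*π), w (circleMap z₀ r t))
      = ∫ t in (0:ℝ)..(2*π), w (z₀ + ↑r * Complex.exp (↑t * Complex.I)) := rfl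
  rw [hfin] at hg0r
  calc w z₀ = (1/(2*π)) * (2*π * w z₀) := by field_simp
  _ ≤ (1/(2*π)) * ∫ t in (0:ℝ)..(2*π), w (z₀ + ↑r * Complex.exp (↑t * Complex.I)) := by
      apply mul_le_mul_of_nonneg_left hg0r (by positivity)

open Metric MeasureTheory Set intervalIntegral in
lemma lap_sub {u₁ u₂ : ℂ → ℝ} {Ω : Set ℂ} (hΩ : IsOpen Ω)
    (h1 : ContDiffOn ℝ 2 u₁ Ω) (h2 : ContDiffOn ℝ 2 u₂ Ω) {z : ℂ} (hz : z ∈ Ω) :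
    lap (fun y => u₁ y - u₂ y) z = lap u₁ z - lap u₂ z := by
  have hd1 : ∀ y ∈ Ω, DifferentiableAt ℝ u₁ y := fun y hy =>
    (h1.differentiableOn (by norm_num)).differentiableAt (hΩ.mem_nhds hy)
  have hd2 : ∀ y ∈ Ω, DifferentiableAt ℝ u₂ y := fun y hy =>
    (h2.differentiableOn (by norm_num)).differentiableAt (hΩ.mem_nhds hy)
  have hev : ∀ v : ℂ, (fun y => fderiv ℝ (fun x => u₁ x - u₂ x) y v)
      =ᶠ[nhds z] fun y => fderiv ℝ u₁ y v - fderiv ℝ u₂ y v := by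
    intro v
    filter_upwards [hΩ.mem_nhds hz] with y hy
    rw [fderiv_fun_sub (hd1 y hy) (hd2 y hy)]
    rfl
  have hdv1 : ∀ v : ℂ, DifferentiableAt ℝ (fun y => fderiv ℝ u₁ y v) z := by
    intro v
    have := ((h1.fderiv_of_isOpen (m := 1) hΩ (by norm_num)).differentiableOn
      (by norm_num)).differentiableAt (hΩ.mem_nhds hz)
    exact this.clm_apply (differentiableAt_const v)
  have hdv2 : ∀ v : ℂ, DifferentiableAt ℝ (fun y => fderiv ℝ u₂ y v) z := by
    intro v
    have := ((h2.fderiv_of_isOpen (m := 1) hΩ (by norm_num)).differentiableOn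
      (by norm_num)).differentiableAt (hΩ.mem_nhds hz)
    exact this.clm_apply (differentiableAt_const v)
  simp only [lap]
  rw [(hev 1).fderiv_eq, (hev Complex.I).fderiv_eq,
    fderiv_fun_sub (hdv1 1) (hdv2 1), fderiv_fun_sub (hdv1 Complex.I) (hdv2 Complex.I)]
  simp only [ContinuousLinearMap.sub_apply]
  ring

open Metric MeasureTheory Set intervalIntegral in
theorem max_difference_subharmonic'
    (Ω : Set ℂ) (hΩ : IsOpen Ω)
    (h : ℂ → ℂ)
    (u₁ u₂ : ℂ → ℝ) (hu₁ : ContDiffOn ℝ 2 u₁ Ω) (hu₂ : ContDiffOn ℝ 2 u₂ Ω)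
    (hpde₁ : ∀ z ∈ Ω, lap u₁ z = 4 * ‖h z‖^2 * Real.exp (2 * u₁ z))
    (hpde₂ : ∀ z ∈ Ω, lap u₂ z = 4 * ‖h z‖^2 * Real.exp (2 * u₂ z)) :
    ContinuousOn (fun z => max (u₁ z) (u₂ z) - u₂ z) Ω ∧
    ∀ z₀ ∈ Ω, ∃ ε > 0, ∀ r : ℝ, 0 < r → r < ε →
      (max (u₁ z₀) (u₂ z₀) - u₂ z₀) ≤ (1 / (2 * π)) *
        ∫ t in (0:ℝ)..(2 * π), (max (u₁ (z₀ + r * Complex.exp (t * Complex.I)))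
          (u₂ (z₀ + r * Complex.exp (t * Complex.I)))
          - u₂ (z₀ + r * Complex.exp (t * Complex.I))) := by
  have hmaxc : ContinuousOn (fun z => max (u₁ z) (u₂ z)) Ω := fun x hx =>
    Filter.Tendsto.max (hu₁.continuousOn x hx) (hu₂.continuousOn x hx)
  refine ⟨hmaxc.sub hu₂.continuousOn, fun z₀ hz₀ => ?_⟩
  by_cases hcase : u₁ z₀ ≤ u₂ z₀
  · refine ⟨1, one_pos, fun r hr _ => ?_⟩
    have h1 : max (u₁ z₀) (u₂ z₀) - u₂ z₀ = 0 := by rw [max_eq_right hcase]; ring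
    rw [h1]
    apply mul_nonneg (by positivity)
    apply intervalIntegral.integral_nonneg (by positivity)
    intro t _
    simp [sub_nonneg, le_max_right]
  · push_neg at hcase
    set U : Set ℂ := Ω ∩ ((fun z => u₁ z - u₂ z) ⁻¹' Ioi 0) with hUdef
    have hUopen : IsOpen U :=
      (hu₁.continuousOn.sub hu₂.continuousOn).isOpen_inter_preimage hΩ isOpen_Ioi
    have hz₀U : z₀ ∈ U := ⟨hz₀, by simp [sub_pos, hcase]⟩
    have hUsub : U ⊆ Ω := inter_subset_left
    have hwC : ContDiffOn ℝ 2 (fun z => u₁ z - u₂ z) U :=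
      (hu₁.mono hUsub).sub (hu₂.mono hUsub)
    have hlapw : ∀ z ∈ U, 0 ≤ lap (fun y => u₁ y - u₂ y) z := by
      intro z hzU
      rw [lap_sub hΩ hu₁ hu₂ (hUsub hzU), hpde₁ z (hUsub hzU), hpde₂ z (hUsub hzU)]
      have h12 : u₂ z ≤ u₁ z := by
        have := hzU.2
        simp only [mem_preimage, mem_Ioi] at this
        linarith
      have hexp : Real.exp (2 * u₂ z) ≤ Real.exp (2 * u₁ z) :=
        Real.exp_le_exp.mpr (by linarith)
      nlinarith [sq_nonneg ‖h z‖]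
    obtain ⟨ε, hε, hsm⟩ := submean hUopen hwC hlapw hz₀U
    obtain ⟨δ, hδ, hδball⟩ : ∃ δ > 0, closedBall z₀ δ ⊆ U :=
      (Metric.nhds_basis_closedBall.mem_iff.1 (hUopen.mem_nhds hz₀U))
    refine ⟨min ε δ, lt_min hε hδ, fun r hr hrlt => ?_⟩
    have hrε : r < ε := lt_of_lt_of_le hrlt (min_le_left _ _)
    have hrδ : r ≤ δ := le_of_lt (lt_of_lt_of_le hrlt (min_le_right _ _))
    have hkey := hsm r hr hrε
    have hmemc : ∀ t : ℝ, z₀ + ↑r * Complex.exp (↑t * Complex.I) ∈ U := by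
      intro t
      apply hδball
      simp only [mem_closedBall, Complex.dist_eq, add_sub_cancel_left]
      rw [norm_mul, Complex.norm_exp_ofReal_mul_I, mul_one, Complex.norm_real, Real.norm_eq_abs,
        _root_.abs_of_nonneg hr.le]
      exact hrδ
    have hvz₀ : max (u₁ z₀) (u₂ z₀) - u₂ z₀ = u₁ z₀ - u₂ z₀ := by
      rw [max_eq_left hcase.le]
    rw [hvz₀]
    refine le_trans hkey (mul_le_mul_of_nonneg_left ?_ (by positivity))
    have hwint : IntervalIntegrable
        (fun t : ℝ => u₁ (z₀ + ↑r * Complex.exp (↑t * Complex.I))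
          - u₂ (z₀ + ↑r * Complex.exp (↑t * Complex.I))) volume 0 (2*π) := by
      apply Continuous.intervalIntegrable
      exact (hu₁.continuousOn.sub hu₂.continuousOn).comp_continuous
        (continuous_circleMap z₀ r) (fun t => hUsub (hmemc t))
    have hvint : IntervalIntegrable
        (fun t : ℝ => max (u₁ (z₀ + ↑r * Complex.exp (↑t * Complex.I)))
          (u₂ (z₀ + ↑r * Complex.exp (↑t * Complex.I)))
          - u₂ (z₀ + ↑r * Complex.exp (↑t * Complex.I))) volume 0 (2*π) := by
      apply Continuous.intervalIntegrable
      exact (hmaxc.sub hu₂.continuousOn).comp_continuous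
        (continuous_circleMap z₀ r) (fun t => hUsub (hmemc t))
    apply intervalIntegral.integral_mono_on (by positivity) hwint hvint
    intro t _
    exact sub_le_sub_right (le_max_left _ _) _


/-- If `u₁, u₂` are C² solutions of `Δu = 4|h|²e^{2u}` on a domain `Ω` with `h`
holomorphic, then `v = max{u₁,u₂} - u₂` is subharmonic on `Ω`. -/
theorem max_difference_subharmonic
    (Ω : Set ℂ) (hΩ : IsOpen Ω) (hconn : IsConnected Ω)
    (h : ℂ → ℂ) (hh : DifferentiableOn ℂ h Ω)
    (u₁ u₂ : ℂ → ℝ) (hu₁ : ContDiffOn ℝ 2 u₁ Ω) (hu₂ : ContDiffOn ℝ 2 u₂ Ω)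
    (hpde₁ : ∀ z ∈ Ω, lap u₁ z = 4 * ‖h z‖^2 * Real.exp (2 * u₁ z))
    (hpde₂ : ∀ z ∈ Ω, lap u₂ z = 4 * ‖h z‖^2 * Real.exp (2 * u₂ z)) :
    SubharmonicOn (fun z => max (u₁ z) (u₂ z) - u₂ z) Ω :=
  max_difference_subharmonic' Ω hΩ h u₁ u₂ hu₁ hu₂ hpde₁ hpde₂
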